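/- Let d ≥ 1, let Q ∈ ℂ[x₁, …, x_d] be a squarefree polynomial, let g = (g^{ij}) be a d×d matrix with entries in ℂ[x₁, …, x_d], and suppose there exist polynomials L₁, …, L_d ∈ ℂ[x₁, …, x_d] such that for every i, Σ_j g^{ij} · ∂_j Q = L_i · Q. Then Q divides det(g) in ℂ[x₁, …, x_d]. -/

import Mathlib

open MvPolynomial

lemma coeff_pderiv_aux {d : ℕ} (j : Fin d) (f : MvPolynomial (Fin d) ℂ) (s : Fin d →₀ ℕ) :
    coeff s (pderiv j f) = ((s j : ℂ) + 1) * coeff (s + Finsupp.single j 1) f := by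
  induction f using MvPolynomial.induction_on' with
  | add p q hp hq => simp [hp, hq, mul_add]
  | monomial m a =>
    rw [pderiv_monomial, coeff_monomial, coeff_monomial]
    by_cases hm : m = s + Finsupp.single j 1
    · subst hm
      have he : (s + Finsupp.single j 1) - Finsupp.single j 1 = s := by
        ext k
        by_cases hk : k = j <;> simp [Finsupp.single_apply, hk]
      rw [if_pos he, if_pos rfl]
      simp [Finsupp.add_apply]
      ring
    · rw [if_neg hm, mul_zero]
      by_cases h0 : m j = 0
      · simp [h0]
      · have hne : ¬ (m - Finsupp.single j 1 = s) := by
          intro he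
          apply hm
          have hle : Finsupp.single j 1 ≤ m := by
            rw [Finsupp.single_le_iff]; omega
          rw [← he, tsub_add_cancel_of_le hle]
        rw [if_neg hne]

lemma exists_pderiv_not_dvd_aux {d : ℕ} (p : MvPolynomial (Fin d) ℂ) (hp : Prime p) :
    ∃ j, ¬ p ∣ pderiv j p := by
  by_contra hcon
  push_neg at hcon
  have hp0 : p ≠ 0 := hp.ne_zero
  by_cases hder : ∀ j, pderiv j p = 0
  · -- p is a constant, hence a unit: contradiction
    apply hp.not_unit
    have hsupp : ∀ m ∈ p.support, m = 0 := by
      intro m hm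
      by_contra hm0
      obtain ⟨j, hj⟩ : ∃ j, m j ≠ 0 := by
        by_contra hj; push_neg at hj
        exact hm0 (Finsupp.ext fun k => hj k)
      have h1 : coeff (m - Finsupp.single j 1) (pderiv j p) = 0 := by rw [hder j]; simp
      rw [coeff_pderiv_aux] at h1
      have hle : Finsupp.single j 1 ≤ m := by rw [Finsupp.single_le_iff]; omega
      rw [tsub_add_cancel_of_le hle] at h1
      rcases mul_eq_zero.mp h1 with h | h
      · exact Nat.cast_add_one_ne_zero _ h
      · exact (MvPolynomial.mem_support_iff.mp hm) h
    have hpc : p = C (coeff 0 p) := by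
      ext m
      rw [coeff_C]
      by_cases hm : m = 0
      · simp [hm]
      · rw [if_neg (fun h => hm h.symm)]
        by_contra hc
        exact hm (hsupp m (MvPolynomial.mem_support_iff.mpr hc))
    rw [hpc]
    have hc0 : coeff 0 p ≠ 0 := by
      intro h; rw [h, map_zero] at hpc; exact hp0 hpc
    exact (isUnit_iff_ne_zero.mpr hc0).map MvPolynomial.C
  · push_neg at hder
    obtain ⟨j, hj⟩ := hder
    obtain ⟨c, hc⟩ := hcon j
    have hc0 : c ≠ 0 := by rintro rfl; rw [mul_zero] at hc; exact hj hc
    set D : (Fin d →₀ ℕ) → Lex (Fin d →₀ ℕ) := ⇑toLex with hD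
    have hDinj : Function.Injective D := toLex.injective
    have hadd : ∀ a b, D (a + b) = D a + D b := fun _ _ => rfl
    have key : ∀ s ∈ (pderiv j p).support, toLex s < AddMonoidAlgebra.supDegree D p := by
      intro s hs
      have h1 : coeff (s + Finsupp.single j 1) p ≠ 0 := by
        intro h
        apply MvPolynomial.mem_support_iff.mp hs
        rw [coeff_pderiv_aux, h, mul_zero]
      have hmem : (s + Finsupp.single j 1) ∈ p.support := MvPolynomial.mem_support_iff.mpr h1
      have hlt : toLex s < toLex (s + Finsupp.single j 1) := by
        apply lt_of_le_of_ne (Finsupp.toLex_monotone le_self_add)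
        intro h
        have h2 := toLex.injective h
        have h3 : s j = s j + 1 := by
          conv_lhs => rw [h2]
          simp [Finsupp.add_apply]
        omega
      exact hlt.trans_le (Finset.le_sup hmem)
    have hne : (pderiv j p).support.Nonempty := Finset.nonempty_iff_ne_empty.mpr (by rwa [Ne, MvPolynomial.support_eq_empty])
    obtain ⟨s0, hs0⟩ := hne
    have hbot : (⊥ : Lex (Fin d →₀ ℕ)) < AddMonoidAlgebra.supDegree D p :=
      lt_of_le_of_lt bot_le (key s0 hs0)
    have hlt : AddMonoidAlgebra.supDegree D (pderiv j p) < AddMonoidAlgebra.supDegree D p := by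
      rw [AddMonoidAlgebra.supDegree]
      exact Finset.sup_lt_iff hbot |>.mpr key
    have hmul : AddMonoidAlgebra.supDegree D (p * c) =
        AddMonoidAlgebra.supDegree D p + AddMonoidAlgebra.supDegree D c := by
      apply AddMonoidAlgebra.supDegree_mul hDinj hadd _ hp0 hc0
      exact mul_ne_zero ((AddMonoidAlgebra.leadingCoeff_eq_zero hDinj).not.mpr hp0)
        ((AddMonoidAlgebra.leadingCoeff_eq_zero hDinj).not.mpr hc0)
    have hge : AddMonoidAlgebra.supDegree D p ≤ AddMonoidAlgebra.supDegree D (p * c) := by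
      rw [hmul]
      exact le_add_of_nonneg_right bot_le
    rw [← hc] at hge
    exact absurd (hge.trans_lt hlt) (lt_irrefl _)

lemma squarefree_dvd_of_prime_dvd_aux {M : Type*} [CommMonoidWithZero M]
    [UniqueFactorizationMonoid M] (Q : M) :
    ∀ D : M, Squarefree Q → (∀ p, Prime p → p ∣ Q → p ∣ D) → Q ∣ D := by
  induction Q using UniqueFactorizationMonoid.induction_on_prime with
  | h₁ => exact fun D hsq _ => (hsq 0 (by simp)).dvd
  | h₂ x hx => exact fun D _ _ => hx.dvd
  | h₃ a p ha hp ih =>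
    intro D hsq hdvd
    obtain ⟨D', rfl⟩ := hdvd p hp (Dvd.intro a rfl)
    have hpa : ¬ p ∣ a := by
      intro hdvd'
      exact hp.not_unit (hsq p (mul_dvd_mul_left p hdvd'))
    have ha' : a ∣ D' := by
      apply ih D' hsq.of_mul_right
      intro q hq hqa
      have hqD : q ∣ p * D' := hdvd q hq (Dvd.dvd.mul_left hqa p)
      rcases hq.dvd_mul.mp hqD with h | h
      · exact absurd (((hq.dvd_prime_iff_associated hp).mp h).symm.dvd.trans hqa) hpa
      · exact h
    exact mul_dvd_mul_left p ha'

/-- If `Q ∈ ℂ[x₁,…,x_d]` is squarefree and the matrix of polynomials `g = (g^{ij})` satisfies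
the boundary equation `Σ_j g^{ij} ∂_j Q = L_i Q` for some polynomials `L_i`, then `Q` divides
`det g`. -/
theorem stmt_15 (d : ℕ) (hd : 1 ≤ d) (Q : MvPolynomial (Fin d) ℂ) (hQ : Squarefree Q)
    (g : Matrix (Fin d) (Fin d) (MvPolynomial (Fin d) ℂ))
    (L : Fin d → MvPolynomial (Fin d) ℂ)
    (h : ∀ i, ∑ j, g i j * pderiv j Q = L i * Q) :
    Q ∣ g.det := by
  classical
  have key : ∀ j, Q ∣ g.det * pderiv j Q := by
    intro j
    have hmv : g.mulVec (fun k => pderiv k Q) = fun i => L i * Q := by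
      funext i
      rw [← h i]
      simp [Matrix.mulVec, dotProduct]
    have h2 : (g.adjugate).mulVec (g.mulVec (fun k => pderiv k Q))
        = g.det • (fun k => pderiv k Q) := by
      rw [Matrix.mulVec_mulVec, Matrix.adjugate_mul, Matrix.smul_mulVec,
        Matrix.one_mulVec]
    rw [hmv] at h2
    have h3 := congrFun h2 j
    refine ⟨∑ i, g.adjugate j i * L i, ?_⟩
    rw [Pi.smul_apply, smul_eq_mul] at h3
    rw [← h3]
    simp only [Matrix.mulVec, dotProduct, Finset.mul_sum]
    exact Finset.sum_congr rfl fun i _ => by ring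
  apply squarefree_dvd_of_prime_dvd_aux Q g.det hQ
  intro p hp hpQ
  obtain ⟨R, rfl⟩ := hpQ
  by_contra hpdet
  have hpR : ¬ p ∣ R := fun hdd => hp.not_unit (hQ p (mul_dvd_mul_left p hdd))
  obtain ⟨j, hj⟩ := exists_pderiv_not_dvd_aux p hp
  apply hj
  have h4 : p ∣ g.det * pderiv j (p * R) :=
    dvd_trans (Dvd.intro R rfl) (key j)
  have h5 : p ∣ pderiv j (p * R) := (hp.dvd_mul.mp h4).resolve_left hpdet
  rw [pderiv_mul] at h5
  have h6 : p ∣ pderiv j p * R := by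
    have : p ∣ p * pderiv j R := Dvd.intro _ rfl
    exact (dvd_add_right this).mp (by rwa [add_comm] at h5)
  exact (hp.dvd_mul.mp h6).resolve_right hpR
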